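/- Let L be a simplicial complex with at least one nonempty face, with a shelling F_1,…,F_t, and let S := {k ∈ {2,…,t} : every proper subset of F_k is contained in F_j for some j < k} be the set of indices of the spanning facets of the shelling. Then the simplicial complex L ∖ {F_k : k ∈ S} obtained by deleting the spanning facets is collapsible. -/

import Mathlib

open Finset

/-- A simplicial complex: a collection of subsets of the vertex set, closed under
taking subsets and containing the empty set. -/
def IsComplex {V : Type*} (K : Set (Finset V)) : Prop :=
  ∅ ∈ K ∧ ∀ σ ∈ K, ∀ τ ⊆ σ, τ ∈ K

/-- `F` is a facet (maximal face) of `K`. -/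
def IsFacet {V : Type*} (K : Set (Finset V)) (F : Finset V) : Prop :=
  F ∈ K ∧ ∀ G ∈ K, F ⊆ G → F = G

/-- `L` is a shelling of `K`: a duplicate-free enumeration of all facets of `K` such that
for each `k ≥ 2` (here `k ≥ 1` in 0-indexed form), the collection
`{σ ⊆ F_k : σ ⊆ F_j for some j < k}` is nonempty and each of its maximal elements has
cardinality `|F_k| - 1`. -/
def IsShelling {V : Type*} (K : Set (Finset V)) (L : List (Finset V)) : Prop :=
  L.Nodup ∧ (∀ F, F ∈ L ↔ IsFacet K F) ∧
    ∀ k : Fin L.length, 1 ≤ (k : ℕ) →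
      (∃ σ : Finset V, σ ⊆ L.get k ∧ ∃ j : Fin L.length, (j : ℕ) < (k : ℕ) ∧ σ ⊆ L.get j) ∧
      ∀ σ : Finset V,
        (σ ⊆ L.get k ∧ ∃ j : Fin L.length, (j : ℕ) < (k : ℕ) ∧ σ ⊆ L.get j) →
        (∀ ρ : Finset V,
          (ρ ⊆ L.get k ∧ ∃ j : Fin L.length, (j : ℕ) < (k : ℕ) ∧ ρ ⊆ L.get j) →
            σ ⊆ ρ → σ = ρ) →
        σ.card + 1 = (L.get k).card

/-- An elementary collapse of `L` removes a pair of faces `{τ, σ}` where `τ ⊊ σ` and `σ`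
is the unique face of `L` properly containing `τ`. -/
def ElemCollapse {V : Type*} (L L' : Set (Finset V)) : Prop :=
  ∃ τ σ : Finset V, τ ∈ L ∧ σ ∈ L ∧ τ ⊂ σ ∧ (∀ ρ ∈ L, τ ⊂ ρ → ρ = σ) ∧
    L' = L \ {τ, σ}

/-- `L` is collapsible: some finite sequence of elementary collapses transforms `L`
into the complex `{∅, {v}}` consisting of a single vertex `v`. -/
def Collapsible {V : Type*} (L : Set (Finset V)) : Prop :=
  ∃ v : V, Relation.ReflTransGen ElemCollapse L ({∅, {v}} : Set (Finset V))


lemma erase_eq_iff' {V : Type*} [DecidableEq V] {x : V} {σ ρ : Finset V} (hx : x ∉ σ) :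
    ρ.erase x = σ ↔ ρ = σ ∨ ρ = insert x σ := by
  constructor
  · intro h
    by_cases hxρ : x ∈ ρ
    · right; rw [← h, Finset.insert_erase hxρ]
    · left; rw [← h, Finset.erase_eq_of_notMem hxρ]
  · rintro (rfl | rfl)
    · exact Finset.erase_eq_of_notMem hx
    · exact Finset.erase_insert hx

lemma collapse_interval {V : Type*} [DecidableEq V] (x : V) (T : Finset (Finset V)) :
    ∀ (C : Set (Finset V)),
      (∀ σ ∈ T, x ∉ σ) →
      (∀ σ ∈ T, σ ∈ C ∧ insert x σ ∈ C) →
      (∀ σ ∈ T, ∀ ρ ∈ C, σ ⊂ ρ → ρ.erase x ∈ T) →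
      Relation.ReflTransGen ElemCollapse C (C \ {ρ | ρ.erase x ∈ T}) := by
  induction T using Finset.strongInduction with
  | _ T ih =>
    intro C hx hmem hcof
    rcases T.eq_empty_or_nonempty with rfl | hT
    · have : C \ {ρ | ρ.erase x ∈ (∅ : Finset (Finset V))} = C := by
        ext ρ; simp
      rw [this]
    · obtain ⟨σ, hσT, hmax⟩ := T.exists_max_image Finset.card hT
      have hxσ := hx σ hσT
      have hmemσ := hmem σ hσT
      have huniq : ∀ ρ ∈ C, σ ⊂ ρ → ρ = insert x σ := by
        intro ρ hρ hsub
        have h1 : ρ.erase x ∈ T := hcof σ hσT ρ hρ hsub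
        have hsσ : σ ⊆ ρ.erase x :=
          fun a ha => Finset.mem_erase.mpr ⟨fun h => hxσ (h ▸ ha), hsub.1 ha⟩
        have heq : ρ.erase x = σ := by
          by_contra hne
          have h2 : σ ⊂ ρ.erase x := ssubset_of_subset_of_ne hsσ (fun h => hne h.symm)
          exact absurd (Finset.card_lt_card h2) (not_lt.mpr (hmax _ h1))
        rcases (erase_eq_iff' hxσ).mp heq with rfl | rfl
        · exact absurd hsub (ssubset_irrefl _)
        · rfl
      have hstep : ElemCollapse C (C \ {σ, insert x σ}) :=
        ⟨σ, insert x σ, hmemσ.1, hmemσ.2, Finset.ssubset_insert hxσ, huniq, rfl⟩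
      have hrec := ih (T.erase σ) (Finset.erase_ssubset hσT) (C \ ({σ, insert x σ} : Set (Finset V)))
        (fun σ' hσ' => hx σ' (Finset.mem_of_mem_erase hσ'))
        (by
          intro σ' hσ'
          have hσ'T := Finset.mem_of_mem_erase hσ'
          have hne := (Finset.mem_erase.mp hσ').1
          have hxσ' := hx σ' hσ'T
          refine ⟨⟨(hmem σ' hσ'T).1, ?_⟩, ⟨(hmem σ' hσ'T).2, ?_⟩⟩
          · rintro (rfl | h)
            · exact hne rfl
            · exact hxσ' (h ▸ Finset.mem_insert_self x σ)
          · rintro (h | h)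
            · exact hxσ (h ▸ Finset.mem_insert_self x σ')
            · exact hne (by
                have := congrArg (Finset.erase · x) h
                simpa [Finset.erase_insert hxσ', Finset.erase_insert hxσ] using this))
        (by
          intro σ' hσ' ρ hρ hsub
          have hσ'T := Finset.mem_of_mem_erase hσ'
          have h1 : ρ.erase x ∈ T := hcof σ' hσ'T ρ hρ.1 hsub
          refine Finset.mem_erase.mpr ⟨?_, h1⟩
          intro heq
          rcases (erase_eq_iff' hxσ).mp heq with rfl | rfl
          · exact hρ.2 (Or.inl rfl)
          · exact hρ.2 (Or.inr rfl))
      have hEq : (C \ ({σ, insert x σ} : Set (Finset V))) \ {ρ | ρ.erase x ∈ T.erase σ}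
          = C \ {ρ | ρ.erase x ∈ T} := by
        ext ρ
        simp only [Set.mem_diff, Set.mem_setOf_eq, Finset.mem_erase, Set.mem_insert_iff,
          Set.mem_singleton_iff]
        constructor
        · rintro ⟨⟨hρC, hρn⟩, hρn2⟩
          refine ⟨hρC, fun hρT => ?_⟩
          by_cases h : ρ.erase x = σ
          · exact hρn ((erase_eq_iff' hxσ).mp h)
          · exact hρn2 ⟨h, hρT⟩
        · rintro ⟨hρC, hρn⟩
          refine ⟨⟨hρC, fun h => hρn ?_⟩, fun h => hρn h.2⟩
          rw [← (erase_eq_iff' hxσ)] at h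
          exact h ▸ hσT
      exact Relation.ReflTransGen.head hstep (hEq ▸ hrec)

lemma exists_max_super {V : Type*} [Fintype V] [DecidableEq V] (S : Set (Finset V))
    {σ : Finset V} (hσ : σ ∈ S) : ∃ G, G ∈ S ∧ σ ⊆ G ∧ ∀ ρ ∈ S, G ⊆ ρ → G = ρ := by
  obtain ⟨G, hG, hmax⟩ := Set.Finite.exists_maximalFor Finset.card _
    (Set.toFinite {G ∈ S | σ ⊆ G}) ⟨σ, hσ, subset_rfl⟩
  exact ⟨G, hG.1, hG.2, fun ρ hρ hsub => Finset.eq_of_subset_of_card_le hsub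
    (hmax ⟨hρ, hG.2.trans hsub⟩ (Finset.card_le_card hsub))⟩

/-- The spanning predicate for index `k` of the shelling. -/
def SpF {V : Type*} (F : List (Finset V)) (k : Fin F.length) : Prop :=
  1 ≤ (k : ℕ) ∧ ∀ σ ⊂ F.get k, ∃ j : Fin F.length, (j : ℕ) < (k : ℕ) ∧ σ ⊆ F.get j

/-- The intermediate complexes: faces of the first `m+1` facets, minus spanning facets
of index at most `m`. -/
def DF {V : Type*} (F : List (Finset V)) (m : ℕ) : Set (Finset V) :=
  {σ | ∃ j : Fin F.length, (j : ℕ) ≤ m ∧ σ ⊆ F.get j} \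
    {G | ∃ k : Fin F.length, (k : ℕ) ≤ m ∧ SpF F k ∧ G = F.get k}

lemma stepF {V : Type*} [DecidableEq V] [Fintype V] (L : Set (Finset V))
    (F : List (Finset V)) (hF : IsShelling L F) {m : ℕ} (hm : m + 1 < F.length) :
    Relation.ReflTransGen ElemCollapse (DF F (m + 1)) (DF F m) := by
  classical
  obtain ⟨hnd, hfac, hshell⟩ := hF
  have hfacet : ∀ j : Fin F.length, IsFacet L (F.get j) :=
    fun j => (hfac _).mp (List.get_mem F j)
  have hsubeq : ∀ j k : Fin F.length, F.get j ⊆ F.get k → j = k := by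
    intro j k h
    exact (List.Nodup.get_inj_iff hnd).mp ((hfacet j).2 _ (hfacet k).1 h)
  set k : Fin F.length := ⟨m + 1, hm⟩ with hkdef
  have hkval : (k : ℕ) = m + 1 := rfl
  set Ol : Finset V → Prop :=
    (fun σ => ∃ j : Fin F.length, (j : ℕ) < m + 1 ∧ σ ⊆ F.get j) with hOldef
  have hOmono : ∀ σ τ : Finset V, σ ⊆ τ → Ol τ → Ol σ :=
    fun σ τ h ⟨j, hj, hs⟩ => ⟨j, hj, h.trans hs⟩
  obtain ⟨hOldne, hmaxcard⟩ := hshell k (by simp [hkdef])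
  by_cases hsp : ∀ σ ⊂ F.get k, ∃ j : Fin F.length, (j : ℕ) < (k : ℕ) ∧ σ ⊆ F.get j
  · -- spanning facet: nothing to collapse
    have heq : DF F (m + 1) = DF F m := by
      ext τ
      simp only [DF, Set.mem_diff, Set.mem_setOf_eq]
      constructor
      · rintro ⟨⟨j, hj, hτ⟩, hns⟩
        refine ⟨?_, fun ⟨k', hk', hsp', hτ'⟩ => hns ⟨k', le_trans hk' (Nat.le_succ m), hsp', hτ'⟩⟩
        rcases Nat.lt_or_ge (j : ℕ) (m + 1) with h | h
        · exact ⟨j, Nat.lt_succ_iff.mp h, hτ⟩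
        · have hjk : j = k := Fin.ext (le_antisymm hj h)
          by_cases hτk : τ = F.get k
          · exact absurd ⟨k, le_of_eq hkval, ⟨by omega, hsp⟩, hτk⟩ hns
          · obtain ⟨j', hj', hτ'⟩ := hsp τ (ssubset_of_subset_of_ne (hjk ▸ hτ) hτk)
            exact ⟨j', by omega, hτ'⟩
      · rintro ⟨⟨j, hj, hτ⟩, hns⟩
        refine ⟨⟨j, le_trans hj (Nat.le_succ m), hτ⟩, ?_⟩
        rintro ⟨k', hk', hsp', rfl⟩
        rcases Nat.lt_or_ge (k' : ℕ) (m + 1) with h | h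
        · exact hns ⟨k', Nat.lt_succ_iff.mp h, hsp', rfl⟩
        · have hkk : k' = k := Fin.ext (le_antisymm hk' h)
          have hje : k' = j := hsubeq k' j hτ
          have h1 : (k' : ℕ) = (k : ℕ) := congrArg Fin.val hkk
          have h2 : (k' : ℕ) = (j : ℕ) := congrArg Fin.val hje
          omega
    rw [heq]
  · -- non-spanning facet
    push_neg at hsp
    obtain ⟨τ0, hτ0ss, hτ0new⟩ := hsp
    have hτ0O : ¬ Ol τ0 := by
      rintro ⟨j, hj, hs⟩
      exact hτ0new j hj hs
    have hB : ∀ σ, σ ⊆ F.get k → Ol σ →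
        ∃ y ∈ F.get k, y ∉ σ ∧ Ol ((F.get k).erase y) := by
      intro σ hσk hσO
      obtain ⟨G, hGS, hσG, hGmax⟩ := exists_max_super {G | G ⊆ F.get k ∧ Ol G} ⟨hσk, hσO⟩
      have hcard := hmaxcard G ⟨hGS.1, hGS.2⟩ (fun ρ hρ hsub => hGmax ρ hρ hsub)
      have h1 : (F.get k \ G).card = 1 := by
        rw [Finset.card_sdiff_of_subset hGS.1]; omega
      obtain ⟨y, hy⟩ := Finset.card_eq_one.mp h1
      have hymem : y ∈ F.get k \ G := hy ▸ Finset.mem_singleton_self y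
      have hGerase : G = (F.get k).erase y := by
        have h2 := Finset.sdiff_sdiff_eq_self hGS.1
        rw [hy] at h2
        rw [← h2, Finset.sdiff_singleton_eq_erase]
      exact ⟨y, (Finset.mem_sdiff.mp hymem).1,
        fun h => (Finset.mem_sdiff.mp hymem).2 (hσG h), hGerase ▸ hGS.2⟩
    have hyτ0 : ∀ y ∈ F.get k, Ol ((F.get k).erase y) → y ∈ τ0 := by
      intro y hy hOy
      by_contra hyn
      exact hτ0O (hOmono _ _ (Finset.subset_erase.mpr ⟨hτ0ss.1, hyn⟩) hOy)
    obtain ⟨x, hxk, hxτ0⟩ := Finset.exists_of_ssubset hτ0ss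
    have hnewerase : ∀ ρ, ρ ⊆ F.get k → ¬ Ol ρ → ¬ Ol (ρ.erase x) := by
      intro ρ hρk hρn hOe
      obtain ⟨y, hyk, hyρe, hyO⟩ := hB (ρ.erase x) ((Finset.erase_subset x ρ).trans hρk) hOe
      have hyx : y ≠ x := fun h => hxτ0 (h ▸ hyτ0 y hyk hyO)
      have hyρ : y ∉ ρ := fun h => hyρe (Finset.mem_erase.mpr ⟨hyx, h⟩)
      exact hρn (hOmono ρ _ (Finset.subset_erase.mpr ⟨hρk, hyρ⟩) hyO)
    set T : Finset (Finset V) :=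
      (F.get k).powerset.filter (fun σ => x ∉ σ ∧ ¬ Ol σ) with hTdef
    have hTmem : ∀ σ, σ ∈ T ↔ σ ⊆ F.get k ∧ x ∉ σ ∧ ¬ Ol σ := by
      intro σ
      simp [hTdef, Finset.mem_filter, Finset.mem_powerset, and_assoc]
    have hnewD : ∀ σ, σ ⊆ F.get k → ¬ Ol σ → σ ∈ DF F (m + 1) := by
      intro σ hσk hσn
      refine ⟨⟨k, le_refl _, hσk⟩, ?_⟩
      rintro ⟨k', hk', hsp', rfl⟩
      rcases Nat.lt_or_ge (k' : ℕ) (m + 1) with h | h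
      · exact hσn ⟨k', h, subset_rfl⟩
      · have hkk : k' = k := Fin.ext (le_antisymm hk' h)
        subst hkk
        exact hτ0new (Classical.choose (hsp'.2 τ0 hτ0ss))
          (Classical.choose_spec (hsp'.2 τ0 hτ0ss)).1
          (Classical.choose_spec (hsp'.2 τ0 hτ0ss)).2
    have hcol := collapse_interval x T (DF F (m + 1))
      (fun σ hσ => ((hTmem σ).mp hσ).2.1)
      (by
        intro σ hσ
        obtain ⟨hσk, hxσ, hσn⟩ := (hTmem σ).mp hσ
        refine ⟨hnewD σ hσk hσn, hnewD (insert x σ) (Finset.insert_subset hxk hσk) ?_⟩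
        exact fun hO => hσn (hOmono σ _ (Finset.subset_insert x σ) hO))
      (by
        intro σ hσ ρ hρ hsub
        obtain ⟨hσk, hxσ, hσn⟩ := (hTmem σ).mp hσ
        obtain ⟨⟨j, hj, hρj⟩, _⟩ := hρ
        have hρk : ρ ⊆ F.get k := by
          rcases Nat.lt_or_ge (j : ℕ) (m + 1) with h | h
          · exact absurd ⟨j, h, hsub.1.trans hρj⟩ hσn
          · exact (Fin.ext (le_antisymm hj h) : j = k) ▸ hρj
        have hρn : ¬ Ol ρ := fun hO => hσn (hOmono σ ρ hsub.1 hO)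
        exact (hTmem _).mpr ⟨(Finset.erase_subset x ρ).trans hρk,
          Finset.notMem_erase x ρ, hnewerase ρ hρk hρn⟩)
    have hfinal : DF F (m + 1) \ {ρ | ρ.erase x ∈ T} = DF F m := by
      ext τ
      simp only [DF, Set.mem_diff, Set.mem_setOf_eq]
      constructor
      · rintro ⟨⟨⟨j, hj, hτj⟩, hns⟩, hnotR⟩
        refine ⟨?_, fun ⟨k', hk', hsp', hτ'⟩ => hns ⟨k', le_trans hk' (Nat.le_succ m), hsp', hτ'⟩⟩
        by_cases hOτ : Ol τ
        · obtain ⟨j', hj', hs⟩ := hOτ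
          exact ⟨j', Nat.lt_succ_iff.mp hj', hs⟩
        · exfalso
          have hτk : τ ⊆ F.get k := by
            rcases Nat.lt_or_ge (j : ℕ) (m + 1) with h | h
            · exact absurd ⟨j, h, hτj⟩ hOτ
            · exact (Fin.ext (le_antisymm hj h) : j = k) ▸ hτj
          exact hnotR ((hTmem _).mpr ⟨(Finset.erase_subset x τ).trans hτk,
            Finset.notMem_erase x τ, hnewerase τ hτk hOτ⟩)
      · rintro ⟨⟨j, hj, hτj⟩, hns⟩
        have hOτ : Ol τ := ⟨j, Nat.lt_succ_of_le hj, hτj⟩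
        refine ⟨⟨⟨j, le_trans hj (Nat.le_succ m), hτj⟩, ?_⟩, ?_⟩
        · rintro ⟨k', hk', hsp', rfl⟩
          rcases Nat.lt_or_ge (k' : ℕ) (m + 1) with h | h
          · exact hns ⟨k', Nat.lt_succ_iff.mp h, hsp', rfl⟩
          · have hkk : k' = k := Fin.ext (le_antisymm hk' h)
            have hje : k' = j := hsubeq k' j hτj
            have h1 : (k' : ℕ) = (k : ℕ) := congrArg Fin.val hkk
            have h2 : (k' : ℕ) = (j : ℕ) := congrArg Fin.val hje
            omega
        · intro hR
          exact ((hTmem _).mp hR).2.2 (hOmono _ _ (Finset.erase_subset x τ) hOτ)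
    rw [← hfinal]
    exact hcol

lemma baseF {V : Type*} [DecidableEq V] [Fintype V] (F : List (Finset V))
    (h0 : 0 < F.length) {v : V} (hv : v ∈ F.get ⟨0, h0⟩) :
    Relation.ReflTransGen ElemCollapse (DF F 0) {∅, {v}} := by
  classical
  have hD0 : DF F 0 = {σ | σ ⊆ F.get ⟨0, h0⟩} := by
    ext τ
    simp only [DF, Set.mem_diff, Set.mem_setOf_eq]
    constructor
    · rintro ⟨⟨j, hj, hτ⟩, _⟩
      exact (Fin.ext (Nat.le_zero.mp hj) : j = ⟨0, h0⟩) ▸ hτ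
    · intro h
      refine ⟨⟨⟨0, h0⟩, le_refl _, h⟩, ?_⟩
      rintro ⟨k', hk', hsp', rfl⟩
      have := hsp'.1
      omega
  set F0 := F.get ⟨0, h0⟩ with hF0
  set T : Finset (Finset V) := F0.powerset.filter (fun σ => v ∉ σ ∧ σ ≠ ∅) with hTdef
  have hTmem : ∀ σ, σ ∈ T ↔ σ ⊆ F0 ∧ v ∉ σ ∧ σ ≠ ∅ := by
    intro σ
    simp [hTdef, Finset.mem_filter, Finset.mem_powerset, and_assoc]
  have hcol := collapse_interval v T (DF F 0)
    (fun σ hσ => ((hTmem σ).mp hσ).2.1)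
    (by
      intro σ hσ
      obtain ⟨hσk, hvσ, hσn⟩ := (hTmem σ).mp hσ
      rw [hD0]
      exact ⟨hσk, Finset.insert_subset hv hσk⟩)
    (by
      intro σ hσ ρ hρ hsub
      obtain ⟨hσk, hvσ, hσn⟩ := (hTmem σ).mp hσ
      rw [hD0] at hρ
      refine (hTmem _).mpr ⟨(Finset.erase_subset v ρ).trans hρ, Finset.notMem_erase v ρ, ?_⟩
      intro hemp
      have : σ ⊆ ρ.erase v := Finset.subset_erase.mpr ⟨hsub.1, hvσ⟩
      rw [hemp] at this
      exact hσn (Finset.subset_empty.mp this))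
  have hfinal : DF F 0 \ {ρ | ρ.erase v ∈ T} = {∅, {v}} := by
    rw [hD0]
    ext ρ
    simp only [Set.mem_diff, Set.mem_setOf_eq, Set.mem_insert_iff, Set.mem_singleton_iff]
    constructor
    · rintro ⟨hρ, hn⟩
      have : ρ.erase v = ∅ := by
        by_contra hne
        exact hn ((hTmem _).mpr ⟨(Finset.erase_subset v ρ).trans hρ,
          Finset.notMem_erase v ρ, hne⟩)
      exact (Finset.erase_eq_empty_iff ρ v).mp this
    · rintro (rfl | rfl)
      · exact ⟨Finset.empty_subset _, fun h => ((hTmem _).mp h).2.2 rfl⟩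
      · refine ⟨Finset.singleton_subset_iff.mpr hv, fun h => ((hTmem _).mp h).2.2 ?_⟩
        simp
  rw [← hfinal]
  exact hcol

/-- Let `L` be a simplicial complex with at least one nonempty face and with a shelling
`F_1, …, F_t`, and let `S` be the set of indices `k ≥ 2` (0-indexed: `k ≥ 1`) of the
spanning facets of the shelling, i.e. those `F_k` all of whose proper subsets are
contained in some earlier `F_j`. Then the complex obtained from `L` by deleting the
spanning facets is collapsible. -/
theorem deleteSpanningFacets_collapsible {V : Type*} [DecidableEq V] [Fintype V]
    (L : Set (Finset V)) (hL : IsComplex L) (hne : ∃ σ ∈ L, σ ≠ ∅)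
    (F : List (Finset V)) (hF : IsShelling L F) :
    Collapsible (L \ {G | ∃ k : Fin F.length, 1 ≤ (k : ℕ) ∧
      (∀ σ ⊂ F.get k, ∃ j : Fin F.length, (j : ℕ) < (k : ℕ) ∧ σ ⊆ F.get j) ∧
      G = F.get k}) := by
  classical
  obtain ⟨σ0, hσ0L, hσ0ne⟩ := hne
  obtain ⟨hnd, hfac, hshell⟩ := hF
  have hfacet : ∀ j : Fin F.length, IsFacet L (F.get j) :=
    fun j => (hfac _).mp (List.get_mem F j)
  have hmemL : ∀ (j : Fin F.length) (σ : Finset V), σ ⊆ F.get j → σ ∈ L :=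
    fun j σ h => hL.2 _ (hfacet j).1 σ h
  have hcover : ∀ σ ∈ L, ∃ j : Fin F.length, σ ⊆ F.get j := by
    intro σ hσ
    obtain ⟨G, hGL, hσG, hGmax⟩ := exists_max_super L hσ
    obtain ⟨j, hj⟩ := List.mem_iff_get.mp ((hfac G).mpr ⟨hGL, hGmax⟩)
    exact ⟨j, hj ▸ hσG⟩
  obtain ⟨j0, hσ0sub⟩ := hcover σ0 hσ0L
  have hpos : 0 < F.length := j0.pos
  have hF0ne : F.get ⟨0, hpos⟩ ≠ ∅ := by
    intro h
    have hsub : F.get ⟨0, hpos⟩ ⊆ F.get j0 := h ▸ Finset.empty_subset _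
    have heq : F.get ⟨0, hpos⟩ = F.get j0 := (hfacet _).2 _ (hfacet j0).1 hsub
    rw [← heq, h] at hσ0sub
    exact hσ0ne (Finset.subset_empty.mp hσ0sub)
  obtain ⟨v, hv⟩ := Finset.nonempty_iff_ne_empty.mpr hF0ne
  have hgoal : (L \ {G | ∃ k : Fin F.length, 1 ≤ (k : ℕ) ∧
      (∀ σ ⊂ F.get k, ∃ j : Fin F.length, (j : ℕ) < (k : ℕ) ∧ σ ⊆ F.get j) ∧
      G = F.get k}) = DF F (F.length - 1) := by
    ext τ
    simp only [DF, Set.mem_diff, Set.mem_setOf_eq, SpF]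
    constructor
    · rintro ⟨hτL, hns⟩
      obtain ⟨j, hj⟩ := hcover τ hτL
      refine ⟨⟨j, by omega, hj⟩, ?_⟩
      rintro ⟨k, hk, ⟨hk1, hsp⟩, rfl⟩
      exact hns ⟨k, hk1, hsp, rfl⟩
    · rintro ⟨⟨j, hj, hτ⟩, hns⟩
      refine ⟨hmemL j τ hτ, ?_⟩
      rintro ⟨k, hk1, hsp, rfl⟩
      exact hns ⟨k, by omega, ⟨hk1, hsp⟩, rfl⟩
  have hchain : ∀ m : ℕ, m < F.length →
      Relation.ReflTransGen ElemCollapse (DF F m) (DF F 0) := by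
    intro m
    induction m with
    | zero => exact fun _ => Relation.ReflTransGen.refl
    | succ m ih =>
      intro h
      exact (stepF L F ⟨hnd, hfac, hshell⟩ h).trans (ih (by omega))
  refine ⟨v, ?_⟩
  rw [hgoal]
  exact (hchain (F.length - 1) (by omega)).trans (baseF F hpos hv)
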